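/- For every natural number n, the number of overhang paths of degree n equals (2n−1)!! = ∏_{i=1}^{n} (2i−1). -/

import Mathlib

/-- An overhang path of degree `n`: a nonempty list of lattice points starting at
`(0,0)`, ending at `(2n,0)`, with pairwise distinct points, all points in the
quadrant `x ≥ 0, y ≥ 0`, and each step in `{(1,1), (1,-1), (-1,1)}`. -/
def IsOverhangPath (n : ℕ) (v : List (ℤ × ℤ)) : Prop :=
  v.head? = some (0, 0) ∧
  v.getLast? = some ((2 * n : ℤ), 0) ∧
  v.Nodup ∧
  (∀ p ∈ v, 0 ≤ p.1 ∧ 0 ≤ p.2) ∧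
  v.Chain' (fun a b => b - a = (1, 1) ∨ b - a = (1, -1) ∨ b - a = (-1, 1))

/-! ### Auxiliary definitions -/

/-- The step relation of an overhang path. -/
def OHStep (a b : ℤ × ℤ) : Prop :=
  b - a = (1, 1) ∨ b - a = (1, -1) ∨ b - a = (-1, 1)

/-- A `±1` step on `ℤ`. -/
def OHStep1 (a b : ℤ) : Prop := b = a + 1 ∨ b = a - 1

/-- The list `s, s ± 1, …, t` (monotone). -/
def jseg (s t : ℤ) : List ℤ :=
  (List.range ((t - s).natAbs + 1)).map
    (fun i : ℕ => s + (if s ≤ t then (i : ℤ) else -(i : ℤ)))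

/-- The lattice point at level `K` with transversal coordinate `j`. -/
def ohpt (K j : ℤ) : ℤ × ℤ := (K + j, K - j)

/-- The monotone segment at level `K` from `j = s` to `j = t`. -/
def ohseg (K s t : ℤ) : List (ℤ × ℤ) := (jseg s t).map (ohpt K)

/-- The truncated-path predicate: a path from `(0,0)` to the point at level `k`
with transversal coordinate `t`. -/
def OHIsPath (k : ℕ) (t : ℤ) (v : List (ℤ × ℤ)) : Prop :=
  v.head? = some (0, 0) ∧ v.getLast? = some ((k : ℤ) + t, (k : ℤ) - t) ∧ v.Nodup ∧
  (∀ p ∈ v, 0 ≤ p.1 ∧ 0 ≤ p.2) ∧ v.Chain' OHStep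

/-! ### Lemmas about `jseg` -/

lemma jseg_ne_nil (s t : ℤ) : jseg s t ≠ [] := by
  simp [jseg, List.range_succ]

lemma jseg_head? (s t : ℤ) : (jseg s t).head? = some s := by
  simp [jseg, List.range_succ_eq_map]

lemma jseg_getLast? (s t : ℤ) : (jseg s t).getLast? = some t := by
  unfold jseg
  rw [List.range_succ, List.map_append, List.getLast?_append_of_ne_nil _ (by simp)]
  simp only [List.map_cons, List.map_nil, List.getLast?_singleton, Option.some.injEq]
  rcases le_or_gt s t with h | h
  · rw [if_pos h]; omega
  · rw [if_neg (not_le.mpr h)]; omega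

lemma jseg_mem_iff {s t x : ℤ} : x ∈ jseg s t ↔ (s ≤ x ∧ x ≤ t) ∨ (t ≤ x ∧ x ≤ s) := by
  unfold jseg
  rw [List.mem_map]
  constructor
  · rintro ⟨i, hi, rfl⟩
    rw [List.mem_range] at hi
    rcases le_or_gt s t with h | h
    · rw [if_pos h]; omega
    · rw [if_neg (not_le.mpr h)]; omega
  · intro hx
    rcases le_or_gt s t with h | h
    · exact ⟨(x - s).natAbs, List.mem_range.mpr (by omega), by rw [if_pos h]; omega⟩
    · exact ⟨(s - x).natAbs, List.mem_range.mpr (by omega), by rw [if_neg (not_le.mpr h)]; omega⟩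

lemma jseg_nodup (s t : ℤ) : (jseg s t).Nodup := by
  unfold jseg
  apply List.Nodup.map _ List.nodup_range
  rcases le_or_gt s t with h | h
  · intro a b hab; simp only [if_pos h] at hab; omega
  · intro a b hab; simp only [if_neg (not_le.mpr h)] at hab; omega

lemma jseg_chain' (s t : ℤ) : (jseg s t).Chain' OHStep1 := by
  unfold jseg
  unfold List.Chain'
  rw [List.isChain_map]
  rw [List.isChain_range_succ]
  intro m hm
  rcases le_or_gt s t with h | h
  · simp only [if_pos h]; left; push_cast; ring
  · simp only [if_neg (not_le.mpr h)]; right; push_cast; ring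

lemma jseg_self (s : ℤ) : jseg s s = [s] := by
  simp [jseg, List.range_succ]

lemma jseg_cons_up {s t : ℤ} (h : s + 1 ≤ t) : jseg s t = s :: jseg (s + 1) t := by
  unfold jseg
  have h1 : (t - s).natAbs = (t - (s + 1)).natAbs + 1 := by omega
  rw [h1, List.range_succ_eq_map, List.map_cons, List.map_map]
  congr 1
  · rw [if_pos (by omega : s ≤ t)]; simp
  · apply List.map_congr_left
    intro i hi
    rw [List.mem_range] at hi
    simp only [Function.comp_apply]
    split_ifs <;> push_cast <;> omega

lemma jseg_cons_down {s t : ℤ} (h : t ≤ s - 1) : jseg s t = s :: jseg (s - 1) t := by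
  unfold jseg
  have h1 : (t - s).natAbs = (t - (s - 1)).natAbs + 1 := by omega
  rw [h1, List.range_succ_eq_map, List.map_cons, List.map_map]
  congr 1
  · rw [if_neg (by omega : ¬ s ≤ t)]; simp
  · apply List.map_congr_left
    intro i hi
    rw [List.mem_range] at hi
    simp only [Function.comp_apply]
    split_ifs <;> push_cast <;> omega

/-- A `±1` walk with pairwise distinct values is the monotone segment
determined by its endpoints. -/
lemma walk_eq_jseg : ∀ (l : List ℤ), l.Chain' OHStep1 → l.Nodup →
    ∀ a b, l.head? = some a → l.getLast? = some b → l = jseg a b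
  | [], _, _, a, b, ha, _ => by simp at ha
  | [x], _, _, a, b, ha, hb => by
      simp only [List.head?_cons, Option.some.injEq] at ha
      simp only [List.getLast?_singleton, Option.some.injEq] at hb
      subst ha; subst hb
      rw [jseg_self]
  | x :: y :: r, hc, hn, a, b, ha, hb => by
      simp only [List.head?_cons, Option.some.injEq] at ha
      subst ha
      rw [List.getLast?_cons_cons] at hb
      unfold List.Chain' at hc
      rw [List.isChain_cons_cons] at hc
      rw [List.nodup_cons] at hn
      have ih : y :: r = jseg y b :=
        walk_eq_jseg (y :: r) hc.2 hn.2 y b rfl hb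
      have hmem : x ∉ jseg y b := by rw [← ih]; exact hn.1
      rcases hc.1 with h1 | h1
      · subst h1
        have hab : x + 1 ≤ b := by
          by_contra hcon
          exact hmem (jseg_mem_iff.mpr (by omega))
        rw [jseg_cons_up hab, ← ih]
      · subst h1
        have hab : b ≤ x - 1 := by
          by_contra hcon
          exact hmem (jseg_mem_iff.mpr (by omega))
        rw [jseg_cons_down hab, ← ih]

/-! ### Lemmas about `ohseg` -/

lemma ohpt_injective (K : ℤ) : Function.Injective (ohpt K) := by
  intro a b h
  simp only [ohpt, Prod.mk.injEq] at h
  omega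

lemma ohseg_ne_nil (K s t : ℤ) : ohseg K s t ≠ [] := by
  simp [ohseg, jseg_ne_nil]

lemma ohseg_head? (K s t : ℤ) : (ohseg K s t).head? = some (ohpt K s) := by
  rw [ohseg, List.head?_map, jseg_head?, Option.map_some]

lemma ohseg_getLast? (K s t : ℤ) : (ohseg K s t).getLast? = some (ohpt K t) := by
  rw [ohseg, List.getLast?_map, jseg_getLast?, Option.map_some]

lemma ohseg_nodup (K s t : ℤ) : (ohseg K s t).Nodup :=
  (jseg_nodup s t).map (ohpt_injective K)

lemma ohseg_chain' (K s t : ℤ) : (ohseg K s t).Chain' OHStep := by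
  unfold List.Chain'
  rw [ohseg, List.isChain_map]
  refine (jseg_chain' s t).imp ?_
  intro a b hab
  rcases hab with h | h
  · right; left; subst h; simp only [ohpt, Prod.ext_iff, Prod.fst_sub, Prod.snd_sub]
    constructor <;> simp
  · right; right; subst h; simp only [ohpt, Prod.ext_iff, Prod.fst_sub, Prod.snd_sub]
    constructor <;> simp

lemma mem_ohseg {K s t : ℤ} {x : ℤ × ℤ} (hx : x ∈ ohseg K s t) :
    ∃ j : ℤ, ((s ≤ j ∧ j ≤ t) ∨ (t ≤ j ∧ j ≤ s)) ∧ x = ohpt K j := by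
  rw [ohseg, List.mem_map] at hx
  obtain ⟨j, hj, rfl⟩ := hx
  exact ⟨j, jseg_mem_iff.mp hj, rfl⟩

lemma sum_of_mem_ohseg {K s t : ℤ} {x : ℤ × ℤ} (hx : x ∈ ohseg K s t) :
    x.1 + x.2 = 2 * K := by
  obtain ⟨j, _, rfl⟩ := mem_ohseg hx
  simp [ohpt]; ring

/-! ### General list lemmas -/

lemma ohchain'_imp_mem {α : Type*} {R S : α → α → Prop} :
    ∀ (l : List α), l.Chain' R → (∀ a ∈ l, ∀ b ∈ l, R a b → S a b) → l.Chain' S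
  | [], _, _ => List.isChain_nil
  | [x], _, _ => List.isChain_singleton x
  | x :: y :: r, hc, h => by
      unfold List.Chain' at hc ⊢
      rw [List.isChain_cons_cons] at hc ⊢
      refine ⟨h x (by simp) y (by simp) hc.1, ?_⟩
      exact ohchain'_imp_mem (y :: r) hc.2
        (fun a ha b hb hab => h a (List.mem_cons_of_mem _ ha) b (List.mem_cons_of_mem _ hb) hab)

lemma ohtakeWhile_eq_left {α : Type*} (pr : α → Bool) :
    ∀ (p q : List α), (∀ x ∈ p, pr x = true) → (∀ x ∈ q.head?, pr x = false) →
      (p ++ q).takeWhile pr = p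
  | [], q, _, hq => by
      cases q with
      | nil => rfl
      | cons b q' =>
          rw [List.nil_append, List.takeWhile_cons_of_neg (by simpa using hq b rfl)]
  | a :: p', q, hp, hq => by
      rw [List.cons_append, List.takeWhile_cons_of_pos (hp a (by simp)),
        ohtakeWhile_eq_left pr p' q (fun x hx => hp x (by simp [hx])) hq]

/-! ### Lemmas about steps and sums -/

lemma ohstep_cases {a b : ℤ × ℤ} (h : OHStep a b) :
    (b.1 = a.1 + 1 ∧ b.2 = a.2 + 1) ∨ (b.1 = a.1 + 1 ∧ b.2 = a.2 - 1) ∨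
      (b.1 = a.1 - 1 ∧ b.2 = a.2 + 1) := by
  rcases h with h | h | h <;>
  · have h1 : b.1 - a.1 = _ := congrArg Prod.fst h
    have h2 : b.2 - a.2 = _ := congrArg Prod.snd h
    simp at h1 h2
    omega

lemma ohsum_mono_of_step {a b : ℤ × ℤ} (h : OHStep a b) : a.1 + a.2 ≤ b.1 + b.2 := by
  rcases ohstep_cases h with h | h | h <;> omega

lemma ohsum_le_getLast {v : List (ℤ × ℤ)} {q : ℤ × ℤ} (hc : v.Chain' OHStep)
    (h : v.getLast? = some q) : ∀ p ∈ v, p.1 + p.2 ≤ q.1 + q.2 := by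
  haveI : IsTrans (ℤ × ℤ) (fun a b => a.1 + a.2 ≤ b.1 + b.2) :=
    ⟨fun a b c hab hbc => le_trans hab hbc⟩
  have hp : v.Pairwise (fun a b => a.1 + a.2 ≤ b.1 + b.2) :=
    List.isChain_iff_pairwise.mp (hc.imp (fun a b => ohsum_mono_of_step))
  have hne : v ≠ [] := by rintro rfl; simp at h
  have hq : q = v.getLast hne := by
    rw [List.getLast?_eq_getLast hne, Option.some_inj] at h; exact h.symm
  intro p hp'
  have hsplit := List.dropLast_append_getLast hne
  rw [← hsplit] at hp hp'
  rcases List.mem_append.mp hp' with h' | h'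
  · have := (List.pairwise_append.mp hp).2.2
    exact hq ▸ this p h' _ (by simp)
  · simp at h'
    rw [hq, h']

lemma OHIsPath.sum_le {k : ℕ} {t : ℤ} {v : List (ℤ × ℤ)} (hv : OHIsPath k t v) :
    ∀ p ∈ v, p.1 + p.2 ≤ 2 * (k : ℤ) := by
  intro p hp
  have h := ohsum_le_getLast hv.2.2.2.2 hv.2.1 p hp
  change p.1 + p.2 ≤ ((k : ℤ) + t) + ((k : ℤ) - t) at h
  omega

/-! ### Decoding: appending a segment to a shorter path -/

lemma ohdecode_isPath {k : ℕ} {t s : ℤ} (ht : |t| ≤ (k : ℤ) + 1) (hs : |s| ≤ (k : ℤ))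
    {v : List (ℤ × ℤ)} (hv : OHIsPath k s v) :
    OHIsPath (k + 1) t (v ++ ohseg ((k : ℤ) + 1) s t) := by
  rw [abs_le] at ht hs
  obtain ⟨hhead, hlast, hnodup, hquad, hchain⟩ := hv
  have hvne : v ≠ [] := by rintro rfl; simp at hhead
  refine ⟨?_, ?_, ?_, ?_, ?_⟩
  · rw [List.head?_append_of_ne_nil _ hvne]; exact hhead
  · rw [List.getLast?_append_of_ne_nil _ (ohseg_ne_nil _ s t), ohseg_getLast?]
    simp only [ohpt, Option.some.injEq, Prod.mk.injEq]
    constructor <;> push_cast <;> ring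
  · rw [List.nodup_append]
    refine ⟨hnodup, ohseg_nodup _ _ _, ?_⟩
    intro x hx x' hx' hxx
    subst hxx
    have h1 : x.1 + x.2 ≤ 2 * (k : ℤ) := by
      have h := ohsum_le_getLast hchain hlast x hx
      change x.1 + x.2 ≤ ((k : ℤ) + s) + ((k : ℤ) - s) at h
      omega
    have h2 := sum_of_mem_ohseg hx'
    omega
  · intro p hp
    rcases List.mem_append.mp hp with h | h
    · exact hquad p h
    · obtain ⟨j, hj, rfl⟩ := mem_ohseg h
      simp only [ohpt]
      constructor <;> [skip; skip] <;> rcases hj with hj | hj <;> omega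
  · unfold List.Chain'
    rw [List.isChain_append]
    refine ⟨hchain, ohseg_chain' _ _ _, ?_⟩
    intro x hx y hy
    rw [hlast, Option.mem_def, Option.some_inj] at hx
    rw [ohseg_head?, Option.mem_def, Option.some_inj] at hy
    subst hx; subst hy
    left
    simp only [ohpt, Prod.ext_iff, Prod.fst_sub, Prod.snd_sub]
    constructor <;> simp

/-! ### The structure theorem: every path decomposes uniquely -/

lemma ohexists_decomp {k : ℕ} {t : ℤ} {v : List (ℤ × ℤ)} (hv : OHIsPath (k + 1) t v) :
    ∃ s : ℤ, |s| ≤ (k : ℤ) ∧ ∃ p : List (ℤ × ℤ), OHIsPath k s p ∧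
      v = p ++ ohseg ((k : ℤ) + 1) s t := by
  obtain ⟨hhead, hlast, hnodup, hquad, hchain⟩ := hv
  set K : ℤ := (k : ℤ) + 1 with hK
  have hlastK : v.getLast? = some (K + t, K - t) := by
    rw [hlast]; congr 2 <;> push_cast <;> ring
  set pr : ℤ × ℤ → Bool := fun x => decide (x.1 + x.2 < 2 * K) with hpr
  set p : List (ℤ × ℤ) := v.takeWhile pr with hp
  set q : List (ℤ × ℤ) := v.dropWhile pr with hq
  have hsplit : v = p ++ q := (List.takeWhile_append_dropWhile (p := pr) (l := v)).symm
  have hsum_le : ∀ x ∈ v, x.1 + x.2 ≤ 2 * K := by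
    intro x hx
    have h := ohsum_le_getLast hchain hlastK x hx
    change x.1 + x.2 ≤ (K + t) + (K - t) at h
    omega
  have hp_lt : ∀ x ∈ p, x.1 + x.2 < 2 * K := by
    intro x hx
    have := List.mem_takeWhile_imp hx
    rw [hpr] at this
    exact of_decide_eq_true this
  have hvne : v ≠ [] := by rintro rfl; simp at hhead
  have hqne : q ≠ [] := by
    intro h0
    have hvp : v = p := by rw [hsplit, h0, List.append_nil]
    have hL : ((K + t, K - t) : ℤ × ℤ) ∈ v := by
      obtain ⟨h', heq⟩ := List.mem_getLast?_eq_getLast (by rw [hlastK]; rfl :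
        ((K + t, K - t) : ℤ × ℤ) ∈ v.getLast?)
      rw [heq]; exact List.getLast_mem h'
    have := hp_lt _ (hvp ▸ hL)
    simp at this
    omega
  have hpne : p ≠ [] ∧ p.head? = some (0, 0) := by
    obtain ⟨a, v', rfl⟩ := List.exists_cons_of_ne_nil hvne
    simp only [List.head?_cons, Option.some.injEq] at hhead
    have hpa : pr a = true := by
      rw [hpr, hhead]; simp [hK]
    rw [hp, List.takeWhile_cons_of_pos hpa]
    exact ⟨List.cons_ne_nil _ _, by simp [hhead]⟩
  have hq_head_not : ∀ x ∈ q.head?, ¬ (x.1 + x.2 < 2 * K) := by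
    intro x hx
    have h0 := List.head?_dropWhile_not pr v
    rw [← hq] at h0
    rw [Option.mem_def] at hx
    rw [hx] at h0
    simpa [hpr] using h0
  have hqchain : q.Chain' OHStep ∧ p.Chain' OHStep ∧
      (∀ x ∈ p.getLast?, ∀ y ∈ q.head?, OHStep x y) := by
    rw [hsplit] at hchain
    have := List.isChain_append.mp hchain
    exact ⟨this.2.1, this.1, this.2.2⟩
  have hq_sum : ∀ x ∈ q, x.1 + x.2 = 2 * K := by
    obtain ⟨b, q', hbq⟩ := List.exists_cons_of_ne_nil hqne
    have hb_sum : b.1 + b.2 = 2 * K := by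
      have h1 := hq_head_not b (by rw [hbq]; simp)
      have h2 : b ∈ v := by rw [hsplit, hbq]; simp
      have := hsum_le b h2
      omega
    intro x hx
    haveI : IsTrans (ℤ × ℤ) (fun a b => a.1 + a.2 ≤ b.1 + b.2) :=
      ⟨fun a b c hab hbc => le_trans hab hbc⟩
    have hpw : q.Pairwise (fun a b => a.1 + a.2 ≤ b.1 + b.2) :=
      List.isChain_iff_pairwise.mp (hqchain.1.imp (fun a b h => by
        rcases ohstep_cases h with h | h | h <;> omega))
    rw [hbq, List.pairwise_cons] at hpw
    have hxv : x ∈ v := by rw [hsplit]; exact List.mem_append_right _ hx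
    rcases (by rw [hbq] at hx; exact List.mem_cons.mp hx : x = b ∨ x ∈ q') with rfl | hx'
    · exact hb_sum
    · have := hpw.1 x hx'
      have := hsum_le x hxv
      omega
  obtain ⟨hqchain', hpchain, hconn⟩ := hqchain
  have hpne' := hpne.1
  have hLlast : p.getLast? = some (p.getLast hpne') := List.getLast?_eq_getLast hpne'
  set L := p.getLast hpne' with hL2
  obtain ⟨H, q', hqcons⟩ := List.exists_cons_of_ne_nil hqne
  have hHhead : q.head? = some H := by rw [hqcons]; rfl
  have hstep : OHStep L H := hconn L (by rw [hLlast]; rfl) H (by rw [hHhead]; rfl)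
  have hLmem : L ∈ p := hL2 ▸ List.getLast_mem hpne'
  have hLv : L ∈ v := hsplit ▸ List.mem_append_left q hLmem
  have hHsum : H.1 + H.2 = 2 * K := hq_sum H (by rw [hqcons]; simp)
  have hLsum : L.1 + L.2 < 2 * K := hp_lt L hLmem
  have hstep' : H.1 = L.1 + 1 ∧ H.2 = L.2 + 1 := by
    rcases ohstep_cases hstep with h | h | h
    · exact h
    · omega
    · omega
  set s : ℤ := H.1 - K with hs2
  have hHpt : H = ohpt K s := by
    have : H.2 = K - s := by rw [hs2]; omega
    rw [ohpt, ← this, hs2]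
    exact Prod.ext_iff.mpr ⟨by ring, rfl⟩
  have hLpt : L = ((k : ℤ) + s, (k : ℤ) - s) := by
    refine Prod.ext_iff.mpr ⟨?_, ?_⟩ <;> simp only [] <;> rw [hs2, hK] at * <;> omega
  have habs : |s| ≤ (k : ℤ) := by
    have := hquad L hLv
    rw [hLpt] at this
    simp only [] at this
    rw [abs_le]
    constructor <;> omega
  have hpIsPath : OHIsPath k s p := by
    refine ⟨hpne.2, by rw [hLlast, hLpt], hnodup.sublist (List.takeWhile_sublist pr), ?_,
      hpchain⟩
    intro x hx
    exact hquad x ((List.takeWhile_sublist pr).subset hx)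
  set f : ℤ × ℤ → ℤ := fun x => x.1 - K with hf
  set jl : List ℤ := q.map f with hjl
  have hqeq : q = jl.map (ohpt K) := by
    rw [hjl, List.map_map]
    have h1 : ∀ x ∈ q, (ohpt K ∘ f) x = id x := by
      intro x hx
      have := hq_sum x hx
      simp only [Function.comp_apply, ohpt, hf, id]
      refine (Prod.ext_iff.mpr ⟨?_, ?_⟩ : (K + (x.1 - K), K - (x.1 - K)) = x)
      · simp only []; ring
      · simp only []; omega
    rw [List.map_congr_left h1, List.map_id]
  have hjchain : jl.Chain' OHStep1 := by
    unfold List.Chain'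
    rw [hjl, List.isChain_map]
    apply ohchain'_imp_mem q hqchain'
    intro a ha b hb hab
    have hsa := hq_sum a ha
    have hsb := hq_sum b hb
    rcases ohstep_cases hab with h | h | h
    · omega
    · left; simp only [hf]; omega
    · right; simp only [hf]; omega
  have hjnodup : jl.Nodup := by
    rw [hjl]
    refine List.Nodup.map_on ?_ (hnodup.sublist (List.dropWhile_sublist pr))
    intro x hx y hy hxy
    have h1 := hq_sum x hx
    have h2 := hq_sum y hy
    simp only [hf] at hxy
    exact Prod.ext_iff.mpr ⟨by omega, by omega⟩
  have hjhead : jl.head? = some s := by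
    rw [hjl, List.head?_map, hHhead, Option.map_some]
  have hjlast : jl.getLast? = some t := by
    rw [hjl, List.getLast?_map]
    have hqlast : q.getLast? = some (K + t, K - t) := by
      rw [hsplit, List.getLast?_append_of_ne_nil _ hqne] at hlastK
      exact hlastK
    rw [hqlast, Option.map_some]
    simp only [hf, Option.some.injEq]
    ring
  have hwalk := walk_eq_jseg jl hjchain hjnodup s t hjhead hjlast
  refine ⟨s, habs, p, hpIsPath, ?_⟩
  rw [hsplit, hqeq, hwalk]
  rfl

/-! ### Counting -/

lemma ohisPath_zero_iff {v : List (ℤ × ℤ)} : OHIsPath 0 0 v ↔ v = [(0, 0)] := by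
  constructor
  · rintro ⟨hhead, hlast, hnodup, -, -⟩
    obtain ⟨a, l, rfl⟩ := List.exists_cons_of_ne_nil (by rintro rfl; simp at hhead :
      (v ≠ []))
    simp only [List.head?_cons, Option.some.injEq] at hhead
    subst hhead
    cases l with
    | nil => norm_num
    | cons b l' =>
      exfalso
      rw [List.getLast?_cons_cons] at hlast
      have h1 : ((0 : ℤ) + 0, (0 : ℤ) - 0) ∈ (b :: l') := by
        obtain ⟨h', heq⟩ := List.mem_getLast?_eq_getLast (by rw [hlast]; rfl :
          (((0 : ℤ) + 0, (0 : ℤ) - 0) : ℤ × ℤ) ∈ (b :: l').getLast?)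
        rw [heq]; exact List.getLast_mem h'
      rw [List.nodup_cons] at hnodup
      apply hnodup.1
      simpa using h1
  · rintro rfl
    refine ⟨rfl, by norm_num, by simp, by simp, List.isChain_singleton _⟩

lemma ohcard_isPath_zero : Nat.card {v : List (ℤ × ℤ) // OHIsPath 0 0 v} = 1 := by
  rw [Nat.card_eq_one_iff_unique]
  refine ⟨⟨fun a b => ?_⟩, ⟨⟨[(0, 0)], ohisPath_zero_iff.mpr rfl⟩⟩⟩
  obtain ⟨v, hv⟩ := a
  obtain ⟨w, hw⟩ := b
  have h1 := ohisPath_zero_iff.mp hv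
  have h2 := ohisPath_zero_iff.mp hw
  subst h1; subst h2
  rfl

lemma ohcard_isPath : ∀ (k : ℕ) (t : ℤ), |t| ≤ (k : ℤ) →
    Nat.card {v : List (ℤ × ℤ) // OHIsPath k t v} = ∏ i ∈ Finset.Icc 1 k, (2 * i - 1) := by
  intro k
  induction k with
  | zero =>
    intro t ht
    have ht0 : t = 0 := by rw [abs_le] at ht; push_cast at ht; omega
    subst ht0
    simpa using ohcard_isPath_zero
  | succ k ih =>
    intro t ht
    have htK : |t| ≤ (k : ℤ) + 1 := by push_cast at ht; exact ht
    set I : Finset ℤ := Finset.Icc (-(k : ℤ)) (k : ℤ) with hI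
    have hfin : ∀ s : ℤ, |s| ≤ (k : ℤ) → Finite {v : List (ℤ × ℤ) // OHIsPath k s v} := by
      intro s hs
      have hpos : 0 < Nat.card {v : List (ℤ × ℤ) // OHIsPath k s v} := by
        rw [ih s hs]
        exact Finset.prod_pos (fun i hi => by rw [Finset.mem_Icc] at hi; omega)
      exact (Nat.card_pos_iff.mp hpos).2
    have habsI : ∀ s : {x // x ∈ I}, |(s.1 : ℤ)| ≤ (k : ℤ) := by
      intro s
      have h2 : -(k : ℤ) ≤ s.1 ∧ (s.1 : ℤ) ≤ (k : ℤ) := Finset.mem_Icc.mp s.2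
      rw [abs_le]; exact h2
    set D : (Σ s : {x // x ∈ I}, {v : List (ℤ × ℤ) // OHIsPath k s.1 v}) →
        {v : List (ℤ × ℤ) // OHIsPath (k + 1) t v} :=
      fun x => ⟨x.2.1 ++ ohseg ((k : ℤ) + 1) x.1.1 t,
        ohdecode_isPath htK (habsI x.1) x.2.2⟩ with hD
    have hbij : Function.Bijective D := by
      constructor
      · rintro ⟨⟨s, hsI⟩, ⟨v, hv⟩⟩ ⟨⟨s', hsI'⟩, ⟨v', hv'⟩⟩ h
        have hval : v ++ ohseg ((k : ℤ) + 1) s t = v' ++ ohseg ((k : ℤ) + 1) s' t :=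
          congrArg Subtype.val h
        set pr : ℤ × ℤ → Bool := fun x => decide (x.1 + x.2 < 2 * ((k : ℤ) + 1)) with hpr
        have hseghead : ∀ (s₀ : ℤ), ∀ x ∈ (ohseg ((k : ℤ) + 1) s₀ t).head?,
            pr x = false := by
          intro s₀ x hx
          rw [ohseg_head?, Option.mem_def, Option.some_inj] at hx
          subst hx
          rw [hpr]
          simp only [ohpt, decide_eq_false_iff_not, not_lt]
          simp
          omega
        have hvtake : ∀ (s₀ : ℤ) (v₀ : List (ℤ × ℤ)), OHIsPath k s₀ v₀ →
            ((v₀ ++ ohseg ((k : ℤ) + 1) s₀ t).takeWhile pr) = v₀ := by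
          intro s₀ v₀ hv₀
          apply ohtakeWhile_eq_left
          · intro x hx
            rw [hpr, decide_eq_true_eq]
            have := hv₀.sum_le x hx
            omega
          · exact hseghead s₀
        have hveq : v = v' := by
          rw [← hvtake s v hv, ← hvtake s' v' hv', hval]
        subst hveq
        have hseg : ohseg ((k : ℤ) + 1) s t = ohseg ((k : ℤ) + 1) s' t :=
          List.append_cancel_left hval
        have hs : s = s' := by
          have := congrArg List.head? hseg
          rw [ohseg_head?, ohseg_head?, Option.some_inj] at this
          exact ohpt_injective _ this
        subst hs
        rfl
      · rintro ⟨v, hv⟩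
        obtain ⟨s, habs, p, hp, heq⟩ := ohexists_decomp hv
        refine ⟨⟨⟨s, ?_⟩, ⟨p, hp⟩⟩, ?_⟩
        · rw [abs_le] at habs; exact Finset.mem_Icc.mpr habs
        · exact Subtype.ext heq.symm
    rw [← Nat.card_eq_of_bijective D hbij]
    haveI : ∀ s : {x // x ∈ I}, Finite {v : List (ℤ × ℤ) // OHIsPath k s.1 v} :=
      fun s => hfin s.1 (habsI s)
    letI : ∀ s : {x // x ∈ I}, Fintype {v : List (ℤ × ℤ) // OHIsPath k s.1 v} :=
      fun s => Fintype.ofFinite _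
    rw [Nat.card_eq_fintype_card, Fintype.card_sigma]
    have hcardfiber : ∀ s : {x // x ∈ I},
        Fintype.card {v : List (ℤ × ℤ) // OHIsPath k s.1 v} =
          ∏ i ∈ Finset.Icc 1 k, (2 * i - 1) := by
      intro s
      rw [← Nat.card_eq_fintype_card]
      exact ih s.1 (habsI s)
    rw [Finset.sum_congr rfl (fun s _ => hcardfiber s), Finset.sum_const, Finset.card_univ,
      Fintype.card_coe]
    have hIcard : I.card = 2 * k + 1 := by
      rw [hI, Int.card_Icc]
      omega
    rw [hIcard, Finset.prod_Icc_succ_top (by omega : 1 ≤ k + 1)]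
    have h21 : 2 * (k + 1) - 1 = 2 * k + 1 := by omega
    rw [h21]
    ring

/-! ### Main theorem -/

/-- The number of overhang paths of degree `n` is `(2n-1)!! = ∏_{i=1}^n (2i-1)`. -/
theorem card_overhangPaths (n : ℕ) :
    Nat.card {v : List (ℤ × ℤ) // IsOverhangPath n v} =
      ∏ i ∈ Finset.Icc 1 n, (2 * i - 1) := by
  have hiff : ∀ v, IsOverhangPath n v ↔ OHIsPath n n v := by
    intro v
    have hpoint : (((2 * n : ℤ), 0) : ℤ × ℤ) = ((n : ℤ) + n, (n : ℤ) - n) := by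
      refine Prod.ext_iff.mpr ⟨by ring, by ring⟩
    unfold IsOverhangPath OHIsPath OHStep
    rw [hpoint]
  rw [Nat.card_congr (Equiv.subtypeEquivRight hiff)]
  exact ohcard_isPath n n (by rw [abs_of_nonneg (by positivity)])
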